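/- Let A₁, A₂ ∈ ℝ^{n×n} and suppose that every complex eigenvalue of A₁ + A₂ has strictly negative real part. Then there exists h₀ > 0 such that for all h ∈ (0, h₀), every complex eigenvalue of the matrix (I + h·A₂)(I + h·A₁) = I + h(A₁ + A₂ + h·A₂A₁) has absolute value strictly smaller than 1. (Applied with A_i = v_i′(θ*, ψ*) for the two partial update fields of a GAN, this shows that alternating gradient descent is locally convergent for small enough learning rates whenever the Jacobian of the full gradient vector field at the equilibrium has only eigenvalues with negative real part.) -/

import Mathlib

open Matrix
attribute [local instance] Matrix.linftyOpSeminormedAddCommGroup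
  Matrix.linftyOpNonUnitalSemiNormedRing Matrix.linftyOpSemiNormedRing
  Matrix.linftyOpNormedRing Matrix.linftyOpNormedAlgebra

lemma aux_spec {N : Type*} [Fintype N] [DecidableEq N] [Nonempty N]
    (B C : Matrix N N ℂ) (hB : ∀ μ ∈ spectrum ℂ B, μ.re < 0) :
    ∃ ε > 0, ∃ δ > 0, ∀ h : ℝ, 0 < h → h < δ →
      ∀ μ ∈ spectrum ℂ (B + (h:ℂ) • C), μ.re < -ε ∧ ‖μ‖ ≤ ‖B‖ + ‖C‖ := by
  obtain ⟨ε, hε, hspec⟩ : ∃ ε > 0, ∀ z ∈ spectrum ℂ B, z.re ≤ -2*ε := by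
    rcases (spectrum ℂ B).eq_empty_or_nonempty with he | hne
    · exact ⟨1, one_pos, by simp [he]⟩
    · obtain ⟨z₀, hz₀, hmax⟩ := (spectrum.isCompact B).exists_isMaxOn hne
        Complex.continuous_re.continuousOn
      refine ⟨-z₀.re/2, by linarith [hB z₀ hz₀], fun z hz => ?_⟩
      have := hmax hz
      simp only [Set.mem_setOf_eq] at this
      linarith
  set R := ‖B‖ + ‖C‖ with hR
  have hR0 : 0 ≤ R := by positivity
  set T : Set ℂ := {z | -ε ≤ z.re ∧ ‖z‖ ≤ R} with hT
  have hTc : IsCompact T := by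
    apply Metric.isCompact_of_isClosed_isBounded
    · have : T = {z : ℂ | -ε ≤ z.re} ∩ {z : ℂ | ‖z‖ ≤ R} := rfl
      rw [this]
      exact (isClosed_le continuous_const Complex.continuous_re).inter
        (isClosed_le continuous_norm continuous_const)
    · refine (Metric.isBounded_closedBall (x := (0:ℂ)) (r := R)).subset fun z hz => ?_
      simpa [Complex.norm_def, Complex.dist_eq] using hz.2
  have hunit : ∀ z ∈ T, IsUnit (algebraMap ℂ (Matrix N N ℂ) z - B) := by
    intro z hz
    by_contra hu
    have hzB : z ∈ spectrum ℂ B := spectrum.mem_iff.mpr hu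
    have h1 := hspec z hzB
    have h2 := hz.1
    linarith
  have hgc : Continuous fun z : ℂ => algebraMap ℂ (Matrix N N ℂ) z - B := by
    simp only [Algebra.algebraMap_eq_smul_one]
    exact (continuous_id.smul continuous_const).sub continuous_const
  have hcont : ContinuousOn
      (fun z : ℂ => ‖Ring.inverse (algebraMap ℂ (Matrix N N ℂ) z - B)‖) T := by
    intro z hz
    obtain ⟨u, hu⟩ := hunit z hz
    have h2 : ContinuousAt Ring.inverse (algebraMap ℂ (Matrix N N ℂ) z - B) := by
      rw [← hu]; exact NormedRing.inverse_continuousAt u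
    have h1 : ContinuousAt (fun z : ℂ => Ring.inverse (algebraMap ℂ (Matrix N N ℂ) z - B)) z :=
      ContinuousAt.comp (g := Ring.inverse) h2 hgc.continuousAt
    exact (h1.norm).continuousWithinAt
  obtain ⟨M, hM⟩ := hTc.exists_bound_of_continuousOn hcont
  set Mp := max M 0 + 1 with hMp
  have hMp0 : 0 < Mp := by positivity
  refine ⟨ε, hε, min 1 (1/(Mp * (‖C‖ + 1))), by positivity, fun h hh0 hhδ μ hμ => ?_⟩
  have hC0 : (0:ℝ) ≤ ‖C‖ := norm_nonneg _
  have hh1 : h ≤ 1 := le_of_lt (lt_of_lt_of_le hhδ (min_le_left _ _))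
  have habs : ‖μ‖ ≤ R := by
    have h1 : ‖μ‖ ≤ ‖B + (h:ℂ) • C‖ := spectrum.norm_le_norm_of_mem hμ
    have h2 : ‖B + (h:ℂ) • C‖ ≤ ‖B‖ + ‖(h:ℂ) • C‖ := norm_add_le _ _
    have h3 : ‖(h:ℂ) • C‖ = |h| * ‖C‖ := by
      rw [norm_smul]; simp
    have : |h| ≤ 1 := by rw [abs_of_pos hh0]; exact hh1
    nlinarith
  refine ⟨?_, habs⟩
  by_contra hre
  push_neg at hre
  have hμT : μ ∈ T := ⟨hre, habs⟩
  set u := (hunit μ hμT).unit with hu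
  have huc : (↑u : Matrix N N ℂ) = algebraMap ℂ (Matrix N N ℂ) μ - B := (hunit μ hμT).unit_spec
  have hinv : ‖(↑u⁻¹ : Matrix N N ℂ)‖ ≤ Mp := by
    have h1 := hM μ hμT
    have : Ring.inverse (algebraMap ℂ (Matrix N N ℂ) μ - B) = (↑u⁻¹ : Matrix N N ℂ) := by
      rw [← huc, Ring.inverse_unit]
    rw [this] at h1
    have := le_max_left M 0
    simp only [norm_norm] at h1
    linarith [le_max_left M 0]
  have hinvpos : 0 < ‖(↑u⁻¹ : Matrix N N ℂ)‖ := Units.norm_pos u⁻¹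
  have hnear : ‖(algebraMap ℂ (Matrix N N ℂ) μ - (B + (h:ℂ) • C)) - ↑u‖
      < ‖(↑u⁻¹ : Matrix N N ℂ)‖⁻¹ := by
    have heq : (algebraMap ℂ (Matrix N N ℂ) μ - (B + (h:ℂ) • C)) - ↑u = -((h:ℂ) • C) := by
      rw [huc]; abel
    rw [heq, norm_neg]
    have h3 : ‖(h:ℂ) • C‖ = |h| * ‖C‖ := by rw [norm_smul]; simp
    rw [h3, abs_of_pos hh0]
    have h4 : h < 1/(Mp * (‖C‖ + 1)) := lt_of_lt_of_le hhδ (min_le_right _ _)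
    have h5 : (Mp)⁻¹ ≤ ‖(↑u⁻¹ : Matrix N N ℂ)‖⁻¹ := by
      exact inv_anti₀ hinvpos hinv
    have h6 : h * ‖C‖ < Mp⁻¹ := by
      have : h * (‖C‖ + 1) < 1/(Mp * (‖C‖+1)) * (‖C‖+1) := by
        apply mul_lt_mul_of_pos_right h4; linarith
      rw [one_div, mul_inv, inv_mul_cancel_right₀ (by linarith : ‖C‖ + 1 ≠ 0)] at this
      nlinarith
    linarith
  exact (spectrum.mem_iff.mp hμ) (u.ofNearby _ hnear).isUnit

lemma aux_shift {N : Type*} [Fintype N] [DecidableEq N] (D : Matrix N N ℂ) (t : ℝ) (ht : t ≠ 0)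
    (lam : ℂ) (hl : lam ∈ spectrum ℂ (1 + (t:ℂ) • D)) :
    ∃ μ ∈ spectrum ℂ D, lam = 1 + (t:ℂ) * μ := by
  have htc : (t:ℂ) ≠ 0 := by exact_mod_cast ht
  have h1 : (1 : Matrix N N ℂ) + (t:ℂ) • D = algebraMap ℂ _ (1:ℂ) + (t:ℂ) • D := by simp
  rw [h1, ← spectrum.singleton_add_eq] at hl
  have h2 : (t:ℂ) • D = (Units.mk0 (t:ℂ) htc) • D := rfl
  rw [h2, spectrum.unit_smul_eq_smul] at hl
  obtain ⟨x, hx, y, hy, rfl⟩ := Set.mem_add.mp hl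
  obtain ⟨μ, hμ, rfl⟩ := hy
  rw [Set.mem_singleton_iff] at hx
  exact ⟨μ, hμ, by simp [hx, Units.smul_def]⟩

lemma aux_key {n : ℕ} (A₁ A₂ : Matrix (Fin n) (Fin n) ℝ) (h : ℝ) :
    (1 + h • A₂) * (1 + h • A₁) = 1 + h • (A₁ + A₂ + h • (A₂ * A₁)) := by
  simp [add_mul, mul_add, smul_add, smul_smul, smul_mul_assoc, mul_smul_comm]
  abel

/-- If every complex eigenvalue of `A₁ + A₂` has strictly negative real part, then
`(I + h·A₂)(I + h·A₁) = I + h(A₁ + A₂ + h·A₂A₁)` and there is `h₀ > 0` such that for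
all `h ∈ (0, h₀)` every complex eigenvalue of `(I + h·A₂)(I + h·A₁)` has absolute value
strictly smaller than `1`; hence alternating gradient descent is locally convergent for
small enough learning rates. -/
theorem altgd_locally_convergent_small_stepsize
    {n : ℕ} (A₁ A₂ : Matrix (Fin n) (Fin n) ℝ)
    (hA : ∀ μ ∈ spectrum ℂ ((A₁ + A₂).map Complex.ofReal), μ.re < 0) :
    (∀ h : ℝ, (1 + h • A₂) * (1 + h • A₁) = 1 + h • (A₁ + A₂ + h • (A₂ * A₁))) ∧
    ∃ h₀ > 0, ∀ h : ℝ, 0 < h → h < h₀ →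
      ∀ lam ∈ spectrum ℂ (((1 + h • A₂) * (1 + h • A₁)).map Complex.ofReal),
        ‖lam‖ < 1 := by
  refine ⟨aux_key A₁ A₂, ?_⟩
  set B := (A₁ + A₂).map Complex.ofReal with hB
  set C := (A₂ * A₁).map Complex.ofReal with hC
  have hmap : ∀ h : ℝ, ((1 + h • A₂) * (1 + h • A₁)).map Complex.ofReal
      = 1 + (h:ℂ) • (B + (h:ℂ) • C) := by
    intro h
    rw [aux_key A₁ A₂ h, hB, hC]
    ext i j
    simp only [Matrix.map_apply, Matrix.add_apply, Matrix.smul_apply, Matrix.one_apply,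
      smul_eq_mul, Complex.ofReal_mul, Complex.ofReal_add, apply_ite Complex.ofReal,
      Complex.ofReal_one, Complex.ofReal_zero]
  rcases Nat.eq_zero_or_pos n with hn | hn
  · subst hn
    refine ⟨1, one_pos, fun h _ _ lam hlam => ?_⟩
    rw [spectrum.mem_iff] at hlam
    exact absurd (isUnit_of_subsingleton _) hlam
  · have : Nonempty (Fin n) := ⟨⟨0, hn⟩⟩
    obtain ⟨ε, hε, δ, hδ, hmain⟩ := aux_spec B C hA
    set R := ‖B‖ + ‖C‖ with hR
    have hR0 : (0:ℝ) ≤ R := by positivity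
    refine ⟨min δ (2*ε/(R^2+1)), by positivity, fun h hh0 hhδ lam hlam => ?_⟩
    rw [hmap h] at hlam
    obtain ⟨μ, hμ, rfl⟩ := aux_shift _ h (ne_of_gt hh0) lam hlam
    obtain ⟨hre, habs⟩ := hmain h hh0 (lt_of_lt_of_le hhδ (min_le_left _ _)) μ hμ
    have h2 : h < 2*ε/(R^2+1) := lt_of_lt_of_le hhδ (min_le_right _ _)
    have hsq : ‖μ‖ ^ 2 = μ.re^2 + μ.im^2 := by
      rw [Complex.sq_norm, Complex.normSq_apply]; ring
    have hμR : μ.re^2 + μ.im^2 ≤ R^2 := by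
      rw [← hsq]
      exact pow_le_pow_left₀ (norm_nonneg μ) habs 2
    have hneg : 2*μ.re + h*(μ.re^2 + μ.im^2) < 0 := by
      have hhR : h*(μ.re^2 + μ.im^2) ≤ h*R^2 :=
        mul_le_mul_of_nonneg_left hμR (le_of_lt hh0)
      have hp : (0:ℝ) < R^2+1 := by positivity
      have h3 : h*(R^2+1) < 2*ε := by
        rw [div_eq_mul_inv] at h2
        have := mul_lt_mul_of_pos_right h2 hp
        rwa [mul_assoc, inv_mul_cancel₀ (ne_of_gt hp), mul_one] at this
      have : h*R^2 < 2*ε := by nlinarith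
      linarith
    have habs2 : ‖1 + (h:ℂ)*μ‖ ^ 2 < 1 := by
      rw [Complex.sq_norm, Complex.normSq_apply]
      simp only [Complex.add_re, Complex.add_im, Complex.one_re, Complex.one_im,
        Complex.mul_re, Complex.mul_im, Complex.ofReal_re, Complex.ofReal_im]
      nlinarith
    nlinarith [norm_nonneg (1 + (h:ℂ)*μ), habs2]
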